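/- Let T be a field, n a positive integer, and e a divisor of n such that all e-th roots of unity lie in T (μ_e ⊆ T*). Let τ be an automorphism of T of order 2 with fixed field R, such that τ(ω) = ω⁻¹ for all ω ∈ μ_e. Then {a ∈ T* : a^e ∈ R*} is a subgroup containing R* and μ_e, and the quotient {a ∈ T* : a^n ∈ R*} / {a ∈ T* : a^e ∈ R*} is isomorphic to {ω ∈ μ_n(T) : τ(ω) = ω⁻¹} / μ_e, via the map sending a to a·τ(a)⁻¹ composed with Hilbert 90 in the reverse direction. -/

import Mathlib

/-- The subgroup `{a ∈ T* : a^k ∈ R*}` of units whose `k`-th power is fixed by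
the automorphism `τ` (here `R = T^τ` is the fixed field). -/
def powFixed (T : Type*) [Field T] (τ : T ≃+* T) (k : ℕ) : Subgroup Tˣ where
  carrier := {a : Tˣ | τ ((a : T) ^ k) = (a : T) ^ k}
  one_mem' := by simp
  mul_mem' := by
    intro a b ha hb
    simp only [Set.mem_setOf_eq, Units.val_mul, mul_pow, map_mul] at *
    rw [ha, hb]
  inv_mem' := by
    intro a ha
    simp only [Set.mem_setOf_eq] at *
    rw [Units.val_inv_eq_inv_val, inv_pow, map_inv₀, ha]

/-- The subgroup `{ω ∈ μ_n(T) : τ(ω) = ω⁻¹}` of `n`-th roots of unity inverted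
by `τ`. -/
def rootsInvSub (T : Type*) [Field T] (τ : T ≃+* T) (n : ℕ) : Subgroup Tˣ where
  carrier := {ω : Tˣ | (ω : T) ^ n = 1 ∧ τ (ω : T) = (ω : T)⁻¹}
  one_mem' := by simp
  mul_mem' := by
    intro a b ha hb
    obtain ⟨ha1, ha2⟩ := ha; obtain ⟨hb1, hb2⟩ := hb
    refine ⟨?_, ?_⟩
    · simp only [Units.val_mul, mul_pow, ha1, hb1, one_mul]
    · simp only [Units.val_mul, map_mul, ha2, hb2, mul_inv]
  inv_mem' := by
    intro a ha
    obtain ⟨ha1, ha2⟩ := ha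
    refine ⟨?_, ?_⟩
    · rw [Units.val_inv_eq_inv_val, inv_pow, ha1, inv_one]
    · rw [Units.val_inv_eq_inv_val, map_inv₀, ha2, inv_inv]

/-- The subgroup `μ_e(T)` of `e`-th roots of unity in `T*`. -/
def muSub (T : Type*) [Field T] (e : ℕ) : Subgroup Tˣ where
  carrier := {ω : Tˣ | (ω : T) ^ e = 1}
  one_mem' := by simp
  mul_mem' := by
    intro a b ha hb
    simp only [Set.mem_setOf_eq, Units.val_mul, mul_pow] at *
    rw [ha, hb, one_mul]
  inv_mem' := by
    intro a ha
    simp only [Set.mem_setOf_eq] at *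
    rw [Units.val_inv_eq_inv_val, inv_pow, ha, inv_one]

/-- Part of Theorem 5.1 of Hazrat–Wadsworth: for a field `T` with an order-2
automorphism `τ` with fixed field `R`, `e ∣ n`, `μ_e ⊆ T*`, and `τ` inverting
`μ_e`, the set `{a ∈ T* : a^e ∈ R*}` is a subgroup containing `R*` and `μ_e`,
and `{a : a^n ∈ R*}/{a : a^e ∈ R*} ≅ {ω ∈ μ_n(T) : τ(ω) = ω⁻¹}/μ_e` via
`a ↦ a·τ(a)⁻¹`. -/
theorem stmt8 (T : Type*) [Field T] (τ : T ≃+* T)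
    (hτ2 : ∀ x : T, τ (τ x) = x) (hτne : τ ≠ RingEquiv.refl T)
    (n e : ℕ) (hn : 0 < n) (he : 0 < e) (hdvd : e ∣ n)
    (hprim : ∃ ζ : T, IsPrimitiveRoot ζ e)
    (hinv : ∀ ω : T, ω ^ e = 1 → τ ω = ω⁻¹) :
    (∀ a : Tˣ, τ (a : T) = (a : T) → a ∈ powFixed T τ e) ∧
    (∀ ω : Tˣ, (ω : T) ^ e = 1 → ω ∈ powFixed T τ e) ∧
    ∃ φ : (powFixed T τ n) ⧸ ((powFixed T τ e).subgroupOf (powFixed T τ n)) ≃*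
        (rootsInvSub T τ n) ⧸ ((muSub T e).subgroupOf (rootsInvSub T τ n)),
      ∀ (a : Tˣ) (ha : a ∈ powFixed T τ n) (b : Tˣ) (hb : b ∈ rootsInvSub T τ n),
        (b : T) = (a : T) * (τ (a : T))⁻¹ →
          φ (QuotientGroup.mk ⟨a, ha⟩) = QuotientGroup.mk ⟨b, hb⟩ := by

  have hmemPow : ∀ a : Tˣ, a ∈ powFixed T τ n ↔ τ ((a : T) ^ n) = (a : T) ^ n := by
    intro a; exact Iff.rfl
  refine ⟨?_, ?_, ?_⟩
  · intro a ha
    show τ ((a : T) ^ e) = (a : T) ^ e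
    rw [map_pow, ha]
  · intro ω hω
    show τ ((ω : T) ^ e) = (ω : T) ^ e
    rw [hω, map_one]
  -- the main isomorphism
  set σ : Tˣ →* Tˣ := Units.map τ.toRingHom.toMonoidHom with hσdef
  have hσval : ∀ u : Tˣ, ((σ u : Tˣ) : T) = τ (u : T) := fun u => rfl
  have key : ∀ a : Tˣ, a ∈ powFixed T τ n → a * (σ a)⁻¹ ∈ rootsInvSub T τ n := by
    intro a ha
    have ha' : τ ((a : T) ^ n) = (a : T) ^ n := ha
    have hval : ((a * (σ a)⁻¹ : Tˣ) : T) = (a : T) * (τ (a : T))⁻¹ := by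
      simp [hσval]
    constructor
    · show ((a * (σ a)⁻¹ : Tˣ) : T) ^ n = 1
      rw [hval, mul_pow, inv_pow, ← map_pow, ha']
      exact mul_inv_cancel₀ (pow_ne_zero n a.ne_zero)
    · show τ ((a * (σ a)⁻¹ : Tˣ) : T) = (((a * (σ a)⁻¹ : Tˣ) : T))⁻¹
      rw [hval, map_mul, map_inv₀, hτ2, mul_inv, inv_inv, mul_comm]
  let f : (powFixed T τ n) →* (rootsInvSub T τ n) :=
  { toFun := fun a => ⟨(a : Tˣ) * (σ (a : Tˣ))⁻¹, key a a.2⟩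
    map_one' := by ext; simp
    map_mul' := by
      intro a b
      ext
      push_cast
      simp [hσval, map_mul, mul_inv]
      ring }
  have fval : ∀ a : powFixed T τ n, ((f a : Tˣ) : T) = ((a : Tˣ) : T) * (τ ((a : Tˣ) : T))⁻¹ := by
    intro a; simp [f, hσval]
  set ψ : (powFixed T τ n) →* (rootsInvSub T τ n) ⧸ ((muSub T e).subgroupOf (rootsInvSub T τ n)) :=
    (QuotientGroup.mk' _).comp f with hψdef
  -- surjectivity
  have hilbert : ∀ b : Tˣ, b ∈ rootsInvSub T τ n →
      ∃ a : Tˣ, ∃ ha : a ∈ powFixed T τ n, (b : T) = (a : T) * (τ (a : T))⁻¹ := by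
    intro b hb
    obtain ⟨hb1, hb2⟩ := hb
    have hex : ∃ c : T, c + (b : T) * τ c ≠ 0 := by
      by_contra h
      push_neg at h
      have h1 : (1 : T) + (b : T) = 0 := by simpa using h 1
      have hbneg : (b : T) = -1 := by linear_combination h1
      apply hτne
      ext x
      have := h x
      rw [hbneg] at this
      have h2 : x - τ x = 0 := by linear_combination this
      exact (sub_eq_zero.mp h2).symm
    obtain ⟨c, hc⟩ := hex
    set a0 : T := c + (b : T) * τ c with ha0def
    have hτa0 : (b : T) * τ a0 = a0 := by
      rw [ha0def, map_add, map_mul, hb2, hτ2, mul_add]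
      have : (b : T) * ((b : T))⁻¹ * c = c := by
        rw [mul_inv_cancel₀ b.ne_zero, one_mul]
      field_simp
      ring
    have hτa0' : τ a0 = ((b : T))⁻¹ * a0 := by
      field_simp
      linear_combination hτa0
    have hτa0ne : τ a0 ≠ 0 := by
      rw [hτa0']
      exact mul_ne_zero (inv_ne_zero b.ne_zero) hc
    refine ⟨Units.mk0 a0 hc, ?_, ?_⟩
    · show τ (a0 ^ n) = a0 ^ n
      rw [map_pow, hτa0', mul_pow, inv_pow, hb1, inv_one, one_mul]
    · show (b : T) = a0 * (τ a0)⁻¹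
      rw [hτa0', mul_inv, inv_inv, ← mul_assoc, mul_comm a0, mul_assoc,
        mul_inv_cancel₀ hc, mul_one]
  have hsurj : Function.Surjective ψ := by
    intro q
    obtain ⟨b, rfl⟩ := QuotientGroup.mk_surjective q
    obtain ⟨a, ha, hab⟩ := hilbert b b.2
    refine ⟨⟨a, ha⟩, ?_⟩
    have : f ⟨a, ha⟩ = b := by
      ext
      rw [fval]
      exact hab.symm
    simp [hψdef, this]
  -- kernel
  have hker : ψ.ker = (powFixed T τ e).subgroupOf (powFixed T τ n) := by
    ext a
    have hne : ((a : Tˣ) : T) ^ e ≠ 0 := pow_ne_zero e (a : Tˣ).ne_zero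
    have hτne' : τ (((a : Tˣ) : T) ^ e) ≠ 0 := by
      simp [pow_ne_zero, (a : Tˣ).ne_zero]
    constructor
    · intro h
      have h' : f a ∈ (muSub T e).subgroupOf (rootsInvSub T τ n) := by
        simpa [hψdef, QuotientGroup.mk'_apply, QuotientGroup.eq_one_iff] using h
      have h'' : ((f a : Tˣ) : T) ^ e = 1 := h'
      rw [fval, mul_pow, inv_pow, ← map_pow] at h''
      show τ (((a : Tˣ) : T) ^ e) = ((a : Tˣ) : T) ^ e
      field_simp at h''
      rw [map_pow]
      simpa only [map_pow] using h''.symm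
    · intro h
      have h' : τ (((a : Tˣ) : T) ^ e) = ((a : Tˣ) : T) ^ e := h
      have h'' : ((f a : Tˣ) : T) ^ e = 1 := by
        rw [fval, mul_pow, inv_pow, ← map_pow, h']
        exact mul_inv_cancel₀ hne
      have : f a ∈ (muSub T e).subgroupOf (rootsInvSub T τ n) := h''
      simpa [hψdef, QuotientGroup.mk'_apply, QuotientGroup.eq_one_iff] using this
  refine ⟨(QuotientGroup.quotientMulEquivOfEq hker.symm).trans
    (QuotientGroup.quotientKerEquivOfSurjective ψ hsurj), ?_⟩
  intro a ha b hb hab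
  have hf : f ⟨a, ha⟩ = ⟨b, hb⟩ := by
    ext
    rw [fval]
    exact hab.symm
  have h1 : (QuotientGroup.quotientMulEquivOfEq hker.symm)
      (QuotientGroup.mk ⟨a, ha⟩) = QuotientGroup.mk ⟨a, ha⟩ := by
    rfl
  rw [MulEquiv.trans_apply, h1]
  show ψ ⟨a, ha⟩ = _
  simp [hψdef, hf]
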